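/- arXiv:2509.21529 — 2 statements merged into one kernel-verified Lean document; each statement's English description precedes it below -/
import Mathlib

section
/- For all positive integers m and n, the minimum rank of the Hopi rectangle graph HD(m,n) satisfies mr(HD(m,n)) ≤ 2mn. -/
/-- `A` is a real symmetric matrix whose off-diagonal nonzero pattern is the
adjacency of `G` (diagonal entries are unconstrained). -/
def CompatMatrix {V : Type*} [Fintype V] (G : SimpleGraph V) (A : Matrix V V ℝ) : Prop :=
  A.IsSymm ∧ ∀ i j : V, i ≠ j → (A i j ≠ 0 ↔ G.Adj i j)

/-- The minimum rank `mr(G)` of a graph. -/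
noncomputable def minRank {V : Type*} [Fintype V] (G : SimpleGraph V) : ℕ :=
  sInf {r | ∃ A : Matrix V V ℝ, CompatMatrix G A ∧ A.rank = r}

/-- The maximum nullity `M(G)` of a graph, where the nullity of an `n × n`
matrix `A` is `n - rank A`. -/
noncomputable def maxNullity {V : Type*} [Fintype V] (G : SimpleGraph V) : ℕ :=
  sSup {k | ∃ A : Matrix V V ℝ, CompatMatrix G A ∧ Fintype.card V - A.rank = k}

/-- The vertex set of the Hopi rectangle graph of order `(m,n)`: the set of
integer lattice points `(i,j)` with `m-1 ≤ i+j ≤ 2n+m-1` and `|i-j| ≤ m`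
(realized as a `Finset` by filtering a sufficiently large box). -/
noncomputable def HDverts (m n : ℕ) : Finset (ℤ × ℤ) :=
  (Finset.Icc (-2 : ℤ) (2*n + 2*m) ×ˢ Finset.Icc (-2 : ℤ) (2*n + 2*m)).filter
    (fun p => (m : ℤ) - 1 ≤ p.1 + p.2 ∧ p.1 + p.2 ≤ 2*n + m - 1 ∧ |p.1 - p.2| ≤ m)

/-- The Hopi rectangle graph `HD(m,n)`: vertices are the points of `HDverts m n`,
and `(i,j)` is adjacent to `(i',j')` iff `|i - i'| + |j - j'| = 1`. -/
def HD (m n : ℕ) : SimpleGraph {p : ℤ × ℤ // p ∈ HDverts m n} where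
  Adj u v := |u.val.1 - v.val.1| + |u.val.2 - v.val.2| = 1
  symm := by
    constructor
    intro u v h
    rw [abs_sub_comm v.val.1 u.val.1, abs_sub_comm v.val.2 u.val.2]
    exact h
  loopless := by constructor; intro u h; simp at h

/-! ### Auxiliary material for the proof -/

open Matrix

/-- Membership in `HDverts` is equivalent to the three defining inequalities. -/
lemma mem_HDverts (m n : ℕ) (p : ℤ × ℤ) :
    p ∈ HDverts m n ↔
      ((m : ℤ) - 1 ≤ p.1 + p.2 ∧ p.1 + p.2 ≤ 2*n + m - 1 ∧
        -(m : ℤ) ≤ p.1 - p.2 ∧ p.1 - p.2 ≤ m) := by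
  unfold HDverts
  simp only [Finset.mem_filter, Finset.mem_product, Finset.mem_Icc, abs_le]
  omega

/-- The adjacency matrix of `HD(m,n)`. -/
def hdA (m n : ℕ) : Matrix {p : ℤ × ℤ // p ∈ HDverts m n} {p : ℤ × ℤ // p ∈ HDverts m n} ℝ :=
  fun p q => if |p.val.1 - q.val.1| + |p.val.2 - q.val.2| = 1 then 1 else 0

/-- A lattice point on an "even" (P2-type) diagonal. -/
def p2pt (m t k : ℕ) : ℤ × ℤ := ((t : ℤ) + k, (t : ℤ) + m - k)

/-- A lattice point on an "odd" (P1-type) diagonal. -/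
def p1pt (m t k : ℕ) : ℤ × ℤ := ((t : ℤ) + k, (t : ℤ) + m - 1 - k)

lemma p2pt_mem (m n t k : ℕ) (hk : k ≤ m) (ht : t < n) : p2pt m t k ∈ HDverts m n := by
  rw [mem_HDverts]; unfold p2pt; simp only; omega

lemma p1pt_mem (m n t k : ℕ) (hk : k < m) (ht : t ≤ n) : p1pt m t k ∈ HDverts m n := by
  rw [mem_HDverts]; unfold p1pt; simp only; omega

/-- The column of `hdA` corresponding to the lattice point `p2pt m t k`,
written as an explicit function. -/
def colP2 (m n t k : ℕ) : {p : ℤ × ℤ // p ∈ HDverts m n} → ℝ :=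
  fun p => if |p.val.1 - ((t : ℤ) + k)| + |p.val.2 - ((t : ℤ) + m - k)| = 1 then 1 else 0

/-- The column of `hdA` corresponding to the lattice point `p1pt m t k`,
written as an explicit function. -/
def colP1 (m n t k : ℕ) : {p : ℤ × ℤ // p ∈ HDverts m n} → ℝ :=
  fun p => if |p.val.1 - ((t : ℤ) + k)| + |p.val.2 - ((t : ℤ) + m - 1 - k)| = 1 then 1 else 0

/-- Generic vanishing of an alternating sum when the predicate holds either never
or on exactly two consecutive indices. -/
lemma sum_alt_zero (N : ℕ) (P : ℕ → Prop) [DecidablePred P]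
    (h : (∀ k, k < N → ¬ P k) ∨
      ∃ k0, k0 + 1 < N ∧ ∀ k, k < N → (P k ↔ (k = k0 ∨ k = k0 + 1))) :
    ∑ k ∈ Finset.range N, ((-1 : ℝ)^k * if P k then 1 else 0) = 0 := by
  rcases h with h | ⟨k0, hk0, h⟩
  · apply Finset.sum_eq_zero
    intro k hk
    rw [Finset.mem_range] at hk
    simp [h k hk]
  · have hterm : ∀ k ∈ Finset.range N, ((-1 : ℝ)^k * if P k then 1 else 0)
        = (if k = k0 then (-1 : ℝ)^k0 else 0) + (if k = k0 + 1 then -(-1 : ℝ)^k0 else 0) := by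
      intro k hk
      rw [Finset.mem_range] at hk
      rcases eq_or_ne k k0 with rfl | h1
      · rw [if_pos ((h k hk).mpr (Or.inl rfl)), if_pos rfl, if_neg (by omega)]
        ring
      · rcases eq_or_ne k (k0 + 1) with rfl | h2
        · rw [if_pos ((h _ hk).mpr (Or.inr rfl)), if_neg h1, if_pos rfl, pow_succ]
          ring
        · rw [if_neg (fun hP => by rcases (h k hk).mp hP with h' | h' <;> contradiction),
            if_neg h1, if_neg h2]
          ring
    rw [Finset.sum_congr rfl hterm, Finset.sum_add_distrib,
      Finset.sum_ite_eq' _ k0, Finset.sum_ite_eq' _ (k0 + 1),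
      if_pos (Finset.mem_range.mpr (by omega)), if_pos (Finset.mem_range.mpr hk0)]
    ring

/-- Relation (a): along a P2-type diagonal, the alternating sum of columns vanishes. -/
lemma relA (m n t : ℕ) :
    ∑ k ∈ Finset.range (m + 1), ((-1 : ℝ)^k) • colP2 m n t k = 0 := by
  funext p
  obtain ⟨⟨x, y⟩, hp⟩ := p
  rw [mem_HDverts] at hp
  simp only [Finset.sum_apply, Pi.smul_apply, Pi.zero_apply, colP2, smul_eq_mul]
  apply sum_alt_zero (m + 1)
    (fun k => |x - ((t : ℤ) + k)| + |y - ((t : ℤ) + m - k)| = 1)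
  by_cases h1 : x + y = 2 * (t : ℤ) + m + 1
  · right
    refine ⟨(x - t - 1).toNat, by omega, ?_⟩
    intro k hk
    simp only [Int.abs_eq_natAbs]
    omega
  · by_cases h2 : x + y = 2 * (t : ℤ) + m - 1
    · right
      refine ⟨(x - t).toNat, by omega, ?_⟩
      intro k hk
      simp only [Int.abs_eq_natAbs]
      omega
    · left
      intro k hk hP
      simp only [Int.abs_eq_natAbs] at hP
      omega

/-- Relation (b): along a line of constant difference, the alternating sum of
P1-type columns vanishes. -/
lemma relB (m n k : ℕ) :
    ∑ t ∈ Finset.range (n + 1), ((-1 : ℝ)^t) • colP1 m n t k = 0 := by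
  funext p
  obtain ⟨⟨x, y⟩, hp⟩ := p
  rw [mem_HDverts] at hp
  simp only [Finset.sum_apply, Pi.smul_apply, Pi.zero_apply, colP1, smul_eq_mul]
  apply sum_alt_zero (n + 1)
    (fun t => |x - ((t : ℤ) + k)| + |y - ((t : ℤ) + m - 1 - k)| = 1)
  by_cases h1 : x - y = 2 * (k : ℤ) - m + 2
  · right
    refine ⟨(x - k - 1).toNat, by omega, ?_⟩
    intro t ht
    simp only [Int.abs_eq_natAbs]
    omega
  · by_cases h2 : x - y = 2 * (k : ℤ) - m
    · right
      refine ⟨(x - k).toNat, by omega, ?_⟩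
      intro t ht
      simp only [Int.abs_eq_natAbs]
      omega
    · left
      intro t ht hP
      simp only [Int.abs_eq_natAbs] at hP
      omega

/-- The spanning family of `2mn` columns. -/
def hdG (m n : ℕ) (x : Fin 2 × Fin m × Fin n) : {p : ℤ × ℤ // p ∈ HDverts m n} → ℝ :=
  if x.1.val = 0 then colP2 m n x.2.2 x.2.1 else colP1 m n x.2.2 x.2.1

/-- The minimum rank of `HD(m,n)` is at most `2mn`. -/
theorem minRank_HD_le (m n : ℕ) (hm : 0 < m) (hn : 0 < n) :
    minRank (HD m n) ≤ 2 * m * n := by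
  have hcompat : CompatMatrix (HD m n) (hdA m n) := by
    constructor
    · show (hdA m n)ᵀ = hdA m n
      ext p q
      simp only [Matrix.transpose_apply, hdA]
      rw [abs_sub_comm q.val.1 p.val.1, abs_sub_comm q.val.2 p.val.2]
    · intro i j _
      show (if |i.val.1 - j.val.1| + |i.val.2 - j.val.2| = 1 then (1:ℝ) else 0) ≠ 0 ↔
        |i.val.1 - j.val.1| + |i.val.2 - j.val.2| = 1
      constructor
      · intro h
        by_contra hc
        exact h (if_neg hc)
      · intro h
        rw [if_pos h]
        norm_num
  have hrank : (hdA m n).rank ≤ 2 * m * n := by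
    rw [Matrix.rank_eq_finrank_span_cols]
    -- every column lies in the span of the family `hdG m n`
    have hcolP2 : ∀ t k : ℕ, t < n → k < m →
        colP2 m n t k ∈ Submodule.span ℝ (Set.range (hdG m n)) := by
      intro t k ht hk
      exact Submodule.subset_span ⟨(⟨0, by omega⟩, ⟨k, hk⟩, ⟨t, ht⟩), rfl⟩
    have hcolP1 : ∀ t k : ℕ, t < n → k < m →
        colP1 m n t k ∈ Submodule.span ℝ (Set.range (hdG m n)) := by
      intro t k ht hk
      exact Submodule.subset_span ⟨(⟨1, by omega⟩, ⟨k, hk⟩, ⟨t, ht⟩), rfl⟩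
    have hcolP2m : ∀ t : ℕ, t < n →
        colP2 m n t m ∈ Submodule.span ℝ (Set.range (hdG m n)) := by
      intro t ht
      have hrel := relA m n t
      rw [Finset.sum_range_succ] at hrel
      have hsum : ∑ k ∈ Finset.range m, ((-1 : ℝ)^k) • colP2 m n t k ∈
          Submodule.span ℝ (Set.range (hdG m n)) :=
        Submodule.sum_mem _ (fun k hk =>
          Submodule.smul_mem _ _ (hcolP2 t k ht (Finset.mem_range.mp hk)))
      have heq : ((-1 : ℝ)^m) • colP2 m n t m
          = -(∑ k ∈ Finset.range m, ((-1 : ℝ)^k) • colP2 m n t k) :=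
        eq_neg_of_add_eq_zero_right hrel
      have h2 : ((-1 : ℝ)^m) • colP2 m n t m ∈ Submodule.span ℝ (Set.range (hdG m n)) := by
        rw [heq]; exact Submodule.neg_mem _ hsum
      have h3 := Submodule.smul_mem _ (((-1 : ℝ)^m)⁻¹) h2
      rwa [inv_smul_smul₀ (pow_ne_zero _ (by norm_num))] at h3
    have hcolP1n : ∀ k : ℕ, k < m →
        colP1 m n n k ∈ Submodule.span ℝ (Set.range (hdG m n)) := by
      intro k hk
      have hrel := relB m n k
      rw [Finset.sum_range_succ] at hrel
      have hsum : ∑ t ∈ Finset.range n, ((-1 : ℝ)^t) • colP1 m n t k ∈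
          Submodule.span ℝ (Set.range (hdG m n)) :=
        Submodule.sum_mem _ (fun t ht =>
          Submodule.smul_mem _ _ (hcolP1 t k (Finset.mem_range.mp ht) hk))
      have heq : ((-1 : ℝ)^n) • colP1 m n n k
          = -(∑ t ∈ Finset.range n, ((-1 : ℝ)^t) • colP1 m n t k) :=
        eq_neg_of_add_eq_zero_right hrel
      have h2 : ((-1 : ℝ)^n) • colP1 m n n k ∈ Submodule.span ℝ (Set.range (hdG m n)) := by
        rw [heq]; exact Submodule.neg_mem _ hsum
      have h3 := Submodule.smul_mem _ (((-1 : ℝ)^n)⁻¹) h2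
      rwa [inv_smul_smul₀ (pow_ne_zero _ (by norm_num))] at h3
    have hkey : ∀ q : {p : ℤ × ℤ // p ∈ HDverts m n},
        (hdA m n)ᵀ q ∈ Submodule.span ℝ (Set.range (hdG m n)) := by
      rintro ⟨⟨x, y⟩, hq⟩
      have hq' := (mem_HDverts m n (x, y)).mp hq
      simp only at hq'
      rcases Int.even_or_odd (x + y - m) with ⟨c, hc⟩ | ⟨c, hc⟩
      · -- P2-type vertex: x = t + k, y = t + m - k
        have hrep : ∃ t k : ℕ, x = (t : ℤ) + k ∧ y = (t : ℤ) + m - k ∧ t < n ∧ k ≤ m :=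
          ⟨c.toNat, (x - c).toNat, by omega, by omega, by omega, by omega⟩
        obtain ⟨t, k, hx, hy, ht, hk⟩ := hrep
        have hcoleq : (hdA m n)ᵀ ⟨(x, y), hq⟩ = colP2 m n t k := by
          funext p
          show (if |p.val.1 - x| + |p.val.2 - y| = 1 then (1:ℝ) else 0) = _
          rw [hx, hy]
          rfl
        rw [hcoleq]
        rcases Nat.lt_or_ge k m with hkm | hkm
        · exact hcolP2 t k ht hkm
        · have : k = m := by omega
          subst this
          exact hcolP2m t ht
      · -- P1-type vertex: x = t + k, y = t + m - 1 - k
        have hrep : ∃ t k : ℕ, x = (t : ℤ) + k ∧ y = (t : ℤ) + m - 1 - k ∧ t ≤ n ∧ k < m :=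
          ⟨(c + 1).toNat, (x - c - 1).toNat, by omega, by omega, by omega, by omega⟩
        obtain ⟨t, k, hx, hy, ht, hk⟩ := hrep
        have hcoleq : (hdA m n)ᵀ ⟨(x, y), hq⟩ = colP1 m n t k := by
          funext p
          show (if |p.val.1 - x| + |p.val.2 - y| = 1 then (1:ℝ) else 0) = _
          rw [hx, hy]
          rfl
        rw [hcoleq]
        rcases Nat.lt_or_ge t n with htn | htn
        · exact hcolP1 t k htn hk
        · have : t = n := by omega
          subst this
          exact hcolP1n k hk
    have hle : Submodule.span ℝ (Set.range (hdA m n)ᵀ)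
        ≤ Submodule.span ℝ (Set.range (hdG m n)) := by
      rw [Submodule.span_le]
      rintro _ ⟨q, rfl⟩
      exact hkey q
    calc Module.finrank ℝ (Submodule.span ℝ (Set.range (hdA m n)ᵀ))
        ≤ Module.finrank ℝ (Submodule.span ℝ (Set.range (hdG m n))) :=
          Submodule.finrank_mono hle
      _ ≤ Fintype.card (Fin 2 × Fin m × Fin n) := finrank_range_le_card (hdG m n)
      _ = 2 * m * n := by simp [Fintype.card_prod]; ring
  exact le_trans (Nat.sInf_le ⟨hdA m n, hcompat, rfl⟩) hrank
end

section
/- For all positive integers m and n, the 2-leaky forcing number and the 3-leaky forcing number of the Hopi rectangle graph HD(m,n) are equal, and both equal 2(m + n), i.e., Z_{(2)}(HD(m,n)) = Z_{(3)}(HD(m,n)) = 2(m+n). -/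
/-- One round of the zero forcing color change rule, where vertices in the
leak set `L` are not permitted to force. A blue vertex `u ∉ L` with exactly one
non-blue neighbor `v` turns `v` blue. -/
def zfStep {V : Type*} (G : SimpleGraph V) (L : Set V) (B : Set V) : Set V :=
  B ∪ {v | ∃ u ∈ B, u ∉ L ∧ G.Adj u v ∧ ∀ w, G.Adj u w → w ∉ B → w = v}

/-- The set of vertices eventually colored blue starting from `B`, with leaks `L`. -/
def zfClosure {V : Type*} (G : SimpleGraph V) (L : Set V) (B : Set V) : Set V :=
  ⋃ k, (zfStep G L)^[k] B

/-- `B` is an `ℓ`-leaky forcing set: for every leak set of size at most `ℓ`,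
starting with exactly `B` blue, eventually every vertex becomes blue. -/
def IsLeakyForcingSet {V : Type*} (G : SimpleGraph V) (ℓ : ℕ) (B : Set V) : Prop :=
  ∀ L : Set V, L.ncard ≤ ℓ → zfClosure G L B = Set.univ

/-- `B` is a zero forcing set (no leaks). -/
def IsZeroForcingSet {V : Type*} (G : SimpleGraph V) (B : Set V) : Prop :=
  zfClosure G (∅ : Set V) B = Set.univ

/-- The zero forcing number `Z(G)`: minimum cardinality of a zero forcing set. -/
noncomputable def zfNumber {V : Type*} (G : SimpleGraph V) : ℕ :=
  sInf (Set.ncard '' {B : Set V | IsZeroForcingSet G B})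

/-- The `ℓ`-leaky forcing number `Z_(ℓ)(G)`: minimum cardinality of an
`ℓ`-leaky forcing set. -/
noncomputable def leakyNumber {V : Type*} (G : SimpleGraph V) (ℓ : ℕ) : ℕ :=
  sInf (Set.ncard '' {B : Set V | IsLeakyForcingSet G ℓ B})

section General

variable {V : Type*} {G : SimpleGraph V} {L B C : Set V}

lemma subset_zfStep : B ⊆ zfStep G L B := Set.subset_union_left

lemma zfStep_mono (h : B ⊆ C) : zfStep G L B ⊆ zfStep G L C := by
  intro v hv
  rcases hv with hv | ⟨u, hu, huL, hadj, huniq⟩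
  · exact Or.inl (h hv)
  · exact Or.inr ⟨u, h hu, huL, hadj, fun w hw hwC => huniq w hw fun hwB => hwC (h hwB)⟩

lemma iterate_succ_subset (k : ℕ) : (zfStep G L)^[k] B ⊆ (zfStep G L)^[k+1] B := by
  induction k with
  | zero => exact subset_zfStep
  | succ k ih =>
    rw [Function.iterate_succ_apply', Function.iterate_succ_apply']
    exact zfStep_mono ih

lemma iterate_mono {k l : ℕ} (h : k ≤ l) : (zfStep G L)^[k] B ⊆ (zfStep G L)^[l] B := by
  induction h with
  | refl => exact subset_rfl
  | step _ ih => exact ih.trans (iterate_succ_subset _)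

lemma subset_zfClosure : B ⊆ zfClosure G L B := by
  have : B = (zfStep G L)^[0] B := rfl
  rw [zfClosure]
  exact this.le.trans (Set.subset_iUnion (fun k => (zfStep G L)^[k] B) 0)

lemma exists_fixed [Finite V] : ∃ k, (zfStep G L)^[k+1] B = (zfStep G L)^[k] B := by
  by_contra h
  push_neg at h
  have key : ∀ k, k ≤ ((zfStep G L)^[k] B).ncard := by
    intro k
    induction k with
    | zero => exact Nat.zero_le _
    | succ k ih =>
      have hlt : ((zfStep G L)^[k] B).ncard < ((zfStep G L)^[k+1] B).ncard :=
        Set.ncard_lt_ncard ((iterate_succ_subset k).ssubset_of_ne (h k).symm) (Set.toFinite _)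
      omega
  have h1 := key (Nat.card V + 1)
  have h2 : (((zfStep G L)^[Nat.card V + 1]) B).ncard ≤ Nat.card V := by
    have := Set.ncard_le_ncard (Set.subset_univ ((zfStep G L)^[Nat.card V + 1] B)) (Set.toFinite _)
    rwa [Set.ncard_univ] at this
  omega

lemma zfStep_zfClosure [Finite V] : zfStep G L (zfClosure G L B) = zfClosure G L B := by
  obtain ⟨k, hk⟩ := exists_fixed (G := G) (L := L) (B := B)
  have hstab : ∀ d, (zfStep G L)^[k + d] B = (zfStep G L)^[k] B := by
    intro d
    induction d with
    | zero => rfl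
    | succ d ih =>
      have : k + (d + 1) = (k + d) + 1 := rfl
      rw [this, Function.iterate_succ_apply', ih]
      rw [Function.iterate_succ_apply'] at hk
      exact hk
  have hcl : zfClosure G L B = (zfStep G L)^[k] B := by
    apply le_antisymm
    · apply Set.iUnion_subset
      intro j
      rcases le_or_gt j k with hj | hj
      · exact iterate_mono hj
      · have : j = k + (j - k) := by omega
        rw [this, hstab]
      -- subset_rfl
    · exact Set.subset_iUnion (fun j => (zfStep G L)^[j] B) k
  rw [Function.iterate_succ_apply'] at hk
  rw [hcl]
  exact hk

lemma mem_of_force [Finite V] {u v : V} (hu : u ∈ zfClosure G L B) (huL : u ∉ L)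
    (hadj : G.Adj u v) (huniq : ∀ w, G.Adj u w → w ∉ zfClosure G L B → w = v) :
    v ∈ zfClosure G L B := by
  have hfix := zfStep_zfClosure (G := G) (L := L) (B := B)
  rw [← hfix]
  exact Or.inr ⟨u, hu, huL, hadj, huniq⟩

lemma not_mem_zfClosure {v : V} (hvB : v ∉ B) (hL : ∀ u, G.Adj u v → u ∈ L) :
    v ∉ zfClosure G L B := by
  intro hv
  have key : ∀ k, v ∉ (zfStep G L)^[k] B := by
    intro k
    induction k with
    | zero => exact hvB
    | succ k ih =>
      rw [Function.iterate_succ_apply']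
      rintro (h | ⟨u, _, huL, hadj, -⟩)
      · exact ih h
      · exact huL (hL u hadj)
  rcases Set.mem_iUnion.1 hv with ⟨k, hk⟩
  exact key k hk

lemma leaky_anti {l l' : ℕ} (h : l ≤ l') (hB : IsLeakyForcingSet G l' B) :
    IsLeakyForcingSet G l B := fun L hL => hB L (hL.trans h)

end General
section Geo

lemma mem_HDverts_iff {m n : ℕ} {p : ℤ × ℤ} :
    p ∈ HDverts m n ↔ ((m:ℤ) - 1 ≤ p.1 + p.2 ∧ p.1 + p.2 ≤ 2*n + m - 1 ∧
      -(m:ℤ) ≤ p.1 - p.2 ∧ p.1 - p.2 ≤ m) := by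
  simp only [HDverts, Finset.mem_filter, Finset.mem_product, Finset.mem_Icc, abs_le]
  constructor
  · rintro ⟨-, h⟩; exact ⟨h.1, h.2.1, h.2.2.1, h.2.2.2⟩
  · intro h; refine ⟨⟨⟨?_, ?_⟩, ?_, ?_⟩, h.1, h.2.1, h.2.2.1, h.2.2.2⟩ <;> omega

lemma coord_bounds {m n : ℕ} {p : ℤ × ℤ} (hp : p ∈ HDverts m n) :
    0 ≤ p.1 ∧ p.1 ≤ (m:ℤ) + n - 1 ∧ 0 ≤ p.2 ∧ p.2 ≤ (m:ℤ) + n - 1 := by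
  rw [mem_HDverts_iff] at hp; omega

/-- The degree-2 (boundary) vertices of the Hopi rectangle. -/
noncomputable def SFin (m n : ℕ) : Finset (ℤ × ℤ) :=
  ((Finset.Icc (0:ℤ) ((m:ℤ)-1)).image fun i => (i, (m:ℤ)-1-i)) ∪
  ((Finset.Icc ((n:ℤ)) ((n:ℤ)+m-1)).image fun i => (i, 2*(n:ℤ)+m-1-i)) ∪
  ((Finset.Icc (0:ℤ) ((n:ℤ)-1)).image fun t => ((m:ℤ)+t, t)) ∪
  ((Finset.Icc (0:ℤ) ((n:ℤ)-1)).image fun t => (t, (m:ℤ)+t))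

lemma mem_SFin_iff {m n : ℕ} {p : ℤ × ℤ} (hp : p ∈ HDverts m n) :
    p ∈ SFin m n ↔ (p.1 + p.2 = (m:ℤ) - 1 ∨ p.1 + p.2 = 2*(n:ℤ)+m-1 ∨
      p.1 - p.2 = (m:ℤ) ∨ p.1 - p.2 = -(m:ℤ)) := by
  obtain ⟨x, y⟩ := p
  rw [mem_HDverts_iff] at hp
  simp only [] at hp
  simp only [SFin, Finset.mem_union, Finset.mem_image, Finset.mem_Icc, Prod.mk.injEq]
  constructor
  · rintro (((⟨i, hi, h1, h2⟩ | ⟨i, hi, h1, h2⟩) | ⟨t, ht, h1, h2⟩) | ⟨t, ht, h1, h2⟩) <;> omega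
  · rintro (h | h | h | h)
    · exact Or.inl (Or.inl (Or.inl ⟨x, by omega⟩))
    · exact Or.inl (Or.inl (Or.inr ⟨x, by omega⟩))
    · exact Or.inl (Or.inr ⟨y, by omega⟩)
    · exact Or.inr ⟨x, by omega⟩

lemma SFin_subset {m n : ℕ} (hn : 0 < n) : SFin m n ⊆ HDverts m n := by
  intro p hp
  obtain ⟨x, y⟩ := p
  simp only [SFin, Finset.mem_union, Finset.mem_image, Finset.mem_Icc, Prod.mk.injEq] at hp
  rw [mem_HDverts_iff]
  simp only []
  rcases hp with (((⟨i, hi, h1, h2⟩ | ⟨i, hi, h1, h2⟩) | ⟨t, ht, h1, h2⟩) | ⟨t, ht, h1, h2⟩) <;>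
    omega

lemma card_SFin {m n : ℕ} (hm : 0 < m) (hn : 0 < n) : (SFin m n).card = 2 * (m + n) := by
  have inj1 : Function.Injective (fun i : ℤ => (i, (m:ℤ)-1-i)) := by
    intro a b h; simpa using congrArg Prod.fst h
  have inj2 : Function.Injective (fun i : ℤ => (i, 2*(n:ℤ)+m-1-i)) := by
    intro a b h; simpa using congrArg Prod.fst h
  have inj3 : Function.Injective (fun t : ℤ => ((m:ℤ)+t, t)) := by
    intro a b h; simpa using congrArg Prod.snd h
  have inj4 : Function.Injective (fun t : ℤ => (t, (m:ℤ)+t)) := by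
    intro a b h; simpa using congrArg Prod.fst h
  have d12 : Disjoint ((Finset.Icc (0:ℤ) ((m:ℤ)-1)).image fun i => (i, (m:ℤ)-1-i))
      ((Finset.Icc ((n:ℤ)) ((n:ℤ)+m-1)).image fun i => (i, 2*(n:ℤ)+m-1-i)) := by
    simp only [Finset.disjoint_left, Finset.mem_image, Finset.mem_Icc, Prod.ext_iff]
    rintro ⟨x, y⟩ ⟨i, hi, h1, h2⟩ ⟨i', hi', h1', h2'⟩
    simp_all
    omega
  have d3 : Disjoint (((Finset.Icc (0:ℤ) ((m:ℤ)-1)).image fun i => (i, (m:ℤ)-1-i)) ∪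
      ((Finset.Icc ((n:ℤ)) ((n:ℤ)+m-1)).image fun i => (i, 2*(n:ℤ)+m-1-i)))
      ((Finset.Icc (0:ℤ) ((n:ℤ)-1)).image fun t => ((m:ℤ)+t, t)) := by
    simp only [Finset.disjoint_left, Finset.mem_union, Finset.mem_image, Finset.mem_Icc,
      Prod.ext_iff]
    rintro ⟨x, y⟩ (⟨i, hi, h1, h2⟩ | ⟨i, hi, h1, h2⟩) ⟨t, ht, h1', h2'⟩ <;> simp_all <;> omega
  have d4 : Disjoint ((((Finset.Icc (0:ℤ) ((m:ℤ)-1)).image fun i => (i, (m:ℤ)-1-i)) ∪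
      ((Finset.Icc ((n:ℤ)) ((n:ℤ)+m-1)).image fun i => (i, 2*(n:ℤ)+m-1-i))) ∪
      ((Finset.Icc (0:ℤ) ((n:ℤ)-1)).image fun t => ((m:ℤ)+t, t)))
      ((Finset.Icc (0:ℤ) ((n:ℤ)-1)).image fun t => (t, (m:ℤ)+t)) := by
    simp only [Finset.disjoint_left, Finset.mem_union, Finset.mem_image, Finset.mem_Icc,
      Prod.ext_iff]
    rintro ⟨x, y⟩ ((⟨i, hi, h1, h2⟩ | ⟨i, hi, h1, h2⟩) | ⟨t, ht, h1, h2⟩) ⟨t', ht', h1', h2'⟩ <;>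
      simp_all <;> omega
  rw [SFin, Finset.card_union_of_disjoint d4, Finset.card_union_of_disjoint d3,
    Finset.card_union_of_disjoint d12, Finset.card_image_of_injective _ inj1,
    Finset.card_image_of_injective _ inj2, Finset.card_image_of_injective _ inj3,
    Finset.card_image_of_injective _ inj4]
  simp only [Int.card_Icc]
  omega

lemma interior_nbrs {m n : ℕ} {p : ℤ × ℤ} (hp : p ∈ HDverts m n) (hps : p ∉ SFin m n) :
    (p.1 + 1, p.2) ∈ HDverts m n ∧ (p.1 - 1, p.2) ∈ HDverts m n ∧
      (p.1, p.2 + 1) ∈ HDverts m n ∧ (p.1, p.2 - 1) ∈ HDverts m n := by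
  rw [mem_SFin_iff hp] at hps
  rw [mem_HDverts_iff] at hp
  push_neg at hps
  refine ⟨?_, ?_, ?_, ?_⟩ <;> rw [mem_HDverts_iff] <;> dsimp only <;> omega

lemma abs_add_abs_eq_one {a b : ℤ} (h : |a| + |b| = 1) :
    (a = 1 ∧ b = 0) ∨ (a = -1 ∧ b = 0) ∨ (a = 0 ∧ b = 1) ∨ (a = 0 ∧ b = -1) := by
  rcases abs_cases a with ⟨h1, _⟩ | ⟨h1, _⟩ <;> rcases abs_cases b with ⟨h2, _⟩ | ⟨h2, _⟩ <;> omega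

lemma boundary_nbrs {m n : ℕ} {p : ℤ × ℤ} (hp : p ∈ HDverts m n) (hps : p ∈ SFin m n) :
    ∃ a b : ℤ × ℤ, ∀ q ∈ HDverts m n, |p.1 - q.1| + |p.2 - q.2| = 1 → q = a ∨ q = b := by
  rw [mem_SFin_iff hp] at hps
  rw [mem_HDverts_iff] at hp
  rcases hps with h | h | h | h
  · refine ⟨(p.1 + 1, p.2), (p.1, p.2 + 1), fun q hq hadj => ?_⟩
    rw [mem_HDverts_iff] at hq
    rcases abs_add_abs_eq_one hadj with h' | h' | h' | h' <;> simp only [Prod.ext_iff] <;> omega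
  · refine ⟨(p.1 - 1, p.2), (p.1, p.2 - 1), fun q hq hadj => ?_⟩
    rw [mem_HDverts_iff] at hq
    rcases abs_add_abs_eq_one hadj with h' | h' | h' | h' <;> simp only [Prod.ext_iff] <;> omega
  · refine ⟨(p.1 - 1, p.2), (p.1, p.2 + 1), fun q hq hadj => ?_⟩
    rw [mem_HDverts_iff] at hq
    rcases abs_add_abs_eq_one hadj with h' | h' | h' | h' <;> simp only [Prod.ext_iff] <;> omega
  · refine ⟨(p.1 + 1, p.2), (p.1, p.2 - 1), fun q hq hadj => ?_⟩
    rw [mem_HDverts_iff] at hq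
    rcases abs_add_abs_eq_one hadj with h' | h' | h' | h' <;> simp only [Prod.ext_iff] <;> omega

end Geo
section Main

abbrev HDV (m n : ℕ) := {p : ℤ × ℤ // p ∈ HDverts m n}

/-- The candidate optimal set: boundary (degree-2) vertices. -/
def Bset (m n : ℕ) : Set (HDV m n) := {v | v.val ∈ SFin m n}

lemma ncard_Bset {m n : ℕ} (hm : 0 < m) (hn : 0 < n) : (Bset m n).ncard = 2 * (m + n) := by
  have h1 : Subtype.val '' (Bset m n) = ↑(SFin m n) := by
    ext p
    constructor
    · rintro ⟨v, hv, rfl⟩; exact hv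
    · intro hp; exact ⟨⟨p, SFin_subset hn hp⟩, hp, rfl⟩
  have h2 : (Bset m n).ncard = (Subtype.val '' (Bset m n)).ncard :=
    (Set.ncard_image_of_injective _ Subtype.val_injective).symm
  rw [h2, h1, Set.ncard_coe_finset, card_SFin hm hn]

lemma exists_corner_max {m n : ℕ} (F : Set (HDV m n)) (hF : F.Nonempty) (f : HDV m n → ℤ) :
    ∃ v ∈ F, (∀ w ∈ F, w.val.1 + w.val.2 ≤ v.val.1 + v.val.2) ∧
      (∀ w ∈ F, w.val.1 + w.val.2 = v.val.1 + v.val.2 → f w ≤ f v) := by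
  obtain ⟨t, htF, htmax⟩ := Set.exists_max_image F (fun v => v.val.1 + v.val.2) F.toFinite hF
  obtain ⟨v, hv, hvmax⟩ := Set.exists_max_image {w ∈ F | w.val.1 + w.val.2 = t.val.1 + t.val.2}
    f (Set.toFinite _) ⟨t, htF, rfl⟩
  obtain ⟨hvF, hvs⟩ := hv
  refine ⟨v, hvF, fun w hw => (htmax w hw).trans_eq hvs.symm, fun w hw hws => ?_⟩
  exact hvmax w ⟨hw, hws.trans hvs⟩

lemma exists_corner_min {m n : ℕ} (F : Set (HDV m n)) (hF : F.Nonempty) (f : HDV m n → ℤ) :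
    ∃ v ∈ F, (∀ w ∈ F, v.val.1 + v.val.2 ≤ w.val.1 + w.val.2) ∧
      (∀ w ∈ F, w.val.1 + w.val.2 = v.val.1 + v.val.2 → f v ≤ f w) := by
  obtain ⟨t, htF, htmin⟩ := Set.exists_min_image F (fun v => v.val.1 + v.val.2) F.toFinite hF
  obtain ⟨v, hv, hvmin⟩ := Set.exists_min_image {w ∈ F | w.val.1 + w.val.2 = t.val.1 + t.val.2}
    f (Set.toFinite _) ⟨t, htF, rfl⟩
  obtain ⟨hvF, hvs⟩ := hv
  refine ⟨v, hvF, fun w hw => hvs.le.trans (htmin w hw), fun w hw hws => ?_⟩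
  exact hvmin w ⟨hw, hws.trans hvs⟩

lemma HD_adj_iff {m n : ℕ} {u v : HDV m n} :
    (HD m n).Adj u v ↔ |u.val.1 - v.val.1| + |u.val.2 - v.val.2| = 1 := Iff.rfl

end Main
section Upper

lemma Bset_leaky {m n : ℕ} (hm : 0 < m) (hn : 0 < n) :
    IsLeakyForcingSet (HD m n) 3 (Bset m n) := by
  intro L hL
  by_contra hne
  set C := zfClosure (HD m n) L (Bset m n) with hCdef
  have hBC : Bset m n ⊆ C := subset_zfClosure
  have hfix : zfStep (HD m n) L C = C := zfStep_zfClosure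
  have hF : Cᶜ.Nonempty := by rwa [Set.nonempty_compl]
  have hFS : ∀ v : HDV m n, v ∈ Cᶜ → v.val ∉ SFin m n := fun v hv hvS => hv (hBC hvS)
  obtain ⟨v1, hv1F, hs1, hi1⟩ := exists_corner_max Cᶜ hF (fun v => v.val.1)
  obtain ⟨v2, hv2F, hs2, hj2⟩ := exists_corner_max Cᶜ hF (fun v => v.val.2)
  obtain ⟨v3, hv3F, hs3, hi3⟩ := exists_corner_min Cᶜ hF (fun v => v.val.1)
  obtain ⟨v4, hv4F, hs4, hj4⟩ := exists_corner_min Cᶜ hF (fun v => v.val.2)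
  have hn1 := interior_nbrs v1.2 (hFS v1 hv1F)
  have hn2 := interior_nbrs v2.2 (hFS v2 hv2F)
  have hn3 := interior_nbrs v3.2 (hFS v3 hv3F)
  have hn4 := interior_nbrs v4.2 (hFS v4 hv4F)
  set u1 : HDV m n := ⟨(v1.val.1 + 1, v1.val.2), hn1.1⟩ with hu1
  set u2 : HDV m n := ⟨(v2.val.1, v2.val.2 + 1), hn2.2.2.1⟩ with hu2
  set u3 : HDV m n := ⟨(v3.val.1 - 1, v3.val.2), hn3.2.1⟩ with hu3
  set u4 : HDV m n := ⟨(v4.val.1, v4.val.2 - 1), hn4.2.2.2⟩ with hu4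
  have e11 : u1.val.1 = v1.val.1 + 1 := by rw [hu1]
  have e12 : u1.val.2 = v1.val.2 := by rw [hu1]
  have e21 : u2.val.1 = v2.val.1 := by rw [hu2]
  have e22 : u2.val.2 = v2.val.2 + 1 := by rw [hu2]
  have e31 : u3.val.1 = v3.val.1 - 1 := by rw [hu3]
  have e32 : u3.val.2 = v3.val.2 := by rw [hu3]
  have e41 : u4.val.1 = v4.val.1 := by rw [hu4]
  have e42 : u4.val.2 = v4.val.2 - 1 := by rw [hu4]
  -- sums comparisons
  have h12 : v1.val.1 + v1.val.2 = v2.val.1 + v2.val.2 :=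
    le_antisymm (hs2 v1 hv1F) (hs1 v2 hv2F)
  have h34 : v3.val.1 + v3.val.2 = v4.val.1 + v4.val.2 :=
    le_antisymm (hs3 v4 hv4F) (hs4 v3 hv3F)
  have h13 : v3.val.1 + v3.val.2 ≤ v1.val.1 + v1.val.2 := hs1 v3 hv3F
  have h14 : v4.val.1 + v4.val.2 ≤ v1.val.1 + v1.val.2 := hs1 v4 hv4F
  have h23 : v3.val.1 + v3.val.2 ≤ v2.val.1 + v2.val.2 := hs2 v3 hv3F
  have h24 : v4.val.1 + v4.val.2 ≤ v2.val.1 + v2.val.2 := hs2 v4 hv4F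
  have hi12 : v2.val.1 ≤ v1.val.1 := hi1 v2 hv2F h12.symm
  have hi34 : v3.val.1 ≤ v4.val.1 := hi3 v4 hv4F h34.symm
  -- the four forcers are in C
  have hu1C : u1 ∈ C := by
    by_contra h
    have h' := hs1 u1 h
    omega
  have hu2C : u2 ∈ C := by
    by_contra h
    have h' := hs2 u2 h
    omega
  have hu3C : u3 ∈ C := by
    by_contra h
    have h' := hs3 u3 h
    omega
  have hu4C : u4 ∈ C := by
    by_contra h
    have h' := hs4 u4 h
    omega
  -- distinctness
  have ne12 : u1 ≠ u2 := by
    intro h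
    have c1 : u1.val.1 = u2.val.1 := congrArg (fun x : HDV m n => x.val.1) h
    have c2 : u1.val.2 = u2.val.2 := congrArg (fun x : HDV m n => x.val.2) h
    omega
  have ne13 : u1 ≠ u3 := by
    intro h
    have c1 : u1.val.1 = u3.val.1 := congrArg (fun x : HDV m n => x.val.1) h
    have c2 : u1.val.2 = u3.val.2 := congrArg (fun x : HDV m n => x.val.2) h
    omega
  have ne14 : u1 ≠ u4 := by
    intro h
    have c1 : u1.val.1 = u4.val.1 := congrArg (fun x : HDV m n => x.val.1) h
    have c2 : u1.val.2 = u4.val.2 := congrArg (fun x : HDV m n => x.val.2) h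
    omega
  have ne23 : u2 ≠ u3 := by
    intro h
    have c1 : u2.val.1 = u3.val.1 := congrArg (fun x : HDV m n => x.val.1) h
    have c2 : u2.val.2 = u3.val.2 := congrArg (fun x : HDV m n => x.val.2) h
    omega
  have ne24 : u2 ≠ u4 := by
    intro h
    have c1 : u2.val.1 = u4.val.1 := congrArg (fun x : HDV m n => x.val.1) h
    have c2 : u2.val.2 = u4.val.2 := congrArg (fun x : HDV m n => x.val.2) h
    omega
  have ne34 : u3 ≠ u4 := by
    intro h
    have c1 : u3.val.1 = u4.val.1 := congrArg (fun x : HDV m n => x.val.1) h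
    have c2 : u3.val.2 = u4.val.2 := congrArg (fun x : HDV m n => x.val.2) h
    omega
  -- some forcer is not a leak
  have hex : ∃ u ∈ ({u1, u2, u3, u4} : Set (HDV m n)), u ∉ L := by
    by_contra hcon
    push_neg at hcon
    have hsub : ({u1, u2, u3, u4} : Set (HDV m n)) ⊆ L := hcon
    have hcard : ({u1, u2, u3, u4} : Set (HDV m n)).ncard = 4 := by
      rw [Set.ncard_insert_of_notMem (by simp [ne12, ne13, ne14]) (Set.toFinite _),
        Set.ncard_insert_of_notMem (by simp [ne23, ne24]) (Set.toFinite _),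
        Set.ncard_insert_of_notMem (by simp [ne34]) (Set.toFinite _),
        Set.ncard_singleton]
    have hle := Set.ncard_le_ncard hsub L.toFinite
    omega
  obtain ⟨u, humem, huL⟩ := hex
  simp only [Set.mem_insert_iff, Set.mem_singleton_iff] at humem
  rcases humem with rfl | rfl | rfl | rfl
  · -- u = u1 forces v1
    have hadj : (HD m n).Adj u1 v1 := by
      rw [HD_adj_iff, e11, e12]
      simp only [add_sub_cancel_left, sub_self, abs_one, abs_zero, add_zero]
    have huniq : ∀ w, (HD m n).Adj u1 w → w ∉ C → w = v1 := by
      intro w hadjw hwC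
      rw [HD_adj_iff] at hadjw
      rcases abs_add_abs_eq_one hadjw with hp | hp | hp | hp
      · exact Subtype.ext (Prod.ext_iff.2 ⟨by omega, by omega⟩)
      · have := hs1 w hwC; omega
      · have := hi1 w hwC (by omega); omega
      · have := hs1 w hwC; omega
    exact hv1F (mem_of_force hu1C huL hadj huniq)
  · have hadj : (HD m n).Adj u2 v2 := by
      rw [HD_adj_iff, e21, e22]
      simp only [add_sub_cancel_left, sub_self, abs_one, abs_zero, add_zero, zero_add]
    have huniq : ∀ w, (HD m n).Adj u2 w → w ∉ C → w = v2 := by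
      intro w hadjw hwC
      rw [HD_adj_iff] at hadjw
      rcases abs_add_abs_eq_one hadjw with hp | hp | hp | hp
      · have := hj2 w hwC (by omega); omega
      · have := hs2 w hwC; omega
      · exact Subtype.ext (Prod.ext_iff.2 ⟨by omega, by omega⟩)
      · have := hs2 w hwC; omega
    exact hv2F (mem_of_force hu2C huL hadj huniq)
  · have hadj : (HD m n).Adj u3 v3 := by
      rw [HD_adj_iff, e31, e32]
      simp only [sub_sub_cancel_left, sub_self, abs_neg, abs_one, abs_zero, add_zero]
    have huniq : ∀ w, (HD m n).Adj u3 w → w ∉ C → w = v3 := by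
      intro w hadjw hwC
      rw [HD_adj_iff] at hadjw
      rcases abs_add_abs_eq_one hadjw with hp | hp | hp | hp
      · have := hs3 w hwC; omega
      · exact Subtype.ext (Prod.ext_iff.2 ⟨by omega, by omega⟩)
      · have := hs3 w hwC; omega
      · have := hi3 w hwC (by omega); omega
    exact hv3F (mem_of_force hu3C huL hadj huniq)
  · have hadj : (HD m n).Adj u4 v4 := by
      rw [HD_adj_iff, e41, e42]
      simp only [sub_sub_cancel_left, sub_self, abs_neg, abs_one, abs_zero, add_zero, zero_add]
    have huniq : ∀ w, (HD m n).Adj u4 w → w ∉ C → w = v4 := by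
      intro w hadjw hwC
      rw [HD_adj_iff] at hadjw
      rcases abs_add_abs_eq_one hadjw with hp | hp | hp | hp
      · have := hs4 w hwC; omega
      · have := hj4 w hwC (by omega); omega
      · have := hs4 w hwC; omega
      · exact Subtype.ext (Prod.ext_iff.2 ⟨by omega, by omega⟩)
    exact hv4F (mem_of_force hu4C huL hadj huniq)

end Upper
section Lower

lemma lower_bound {m n : ℕ} (hm : 0 < m) (hn : 0 < n) (B' : Set (HDV m n))
    (hB' : IsLeakyForcingSet (HD m n) 2 B') : 2 * (m + n) ≤ B'.ncard := by
  have hsub : Bset m n ⊆ B' := by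
    intro v hv
    by_contra hvB
    set L : Set (HDV m n) := {w | (HD m n).Adj v w} with hLdef
    have hL2 : L.ncard ≤ 2 := by
      obtain ⟨a, b, hab⟩ := boundary_nbrs v.2 hv
      have himg : Subtype.val '' L ⊆ {a, b} := by
        rintro _ ⟨w, hw, rfl⟩
        exact hab w.val w.2 hw
      have h1 : L.ncard = (Subtype.val '' L).ncard :=
        (Set.ncard_image_of_injective _ Subtype.val_injective).symm
      have h2 : (Subtype.val '' L).ncard ≤ ({a, b} : Set (ℤ × ℤ)).ncard :=
        Set.ncard_le_ncard himg (Set.toFinite _)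
      have h3 : ({a, b} : Set (ℤ × ℤ)).ncard ≤ 2 := by
        have := Set.ncard_insert_le a ({b} : Set (ℤ × ℤ))
        simpa using this
      omega
    have hclose := hB' L hL2
    have hnot := not_mem_zfClosure (v := v) (B := B') (L := L) hvB
      (fun u hu => (HD m n).adj_symm hu)
    rw [hclose] at hnot
    exact hnot (Set.mem_univ v)
  calc 2 * (m + n) = (Bset m n).ncard := (ncard_Bset hm hn).symm
    _ ≤ B'.ncard := Set.ncard_le_ncard hsub B'.toFinite

end Lower

/-- The `2`-leaky and `3`-leaky forcing numbers of `HD(m,n)` are equal, and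
both equal `2(m + n)`. -/
theorem two_three_leaky_HD (m n : ℕ) (hm : 0 < m) (hn : 0 < n) :
    leakyNumber (HD m n) 2 = 2 * (m + n) ∧
      leakyNumber (HD m n) 3 = 2 * (m + n) := by
  have h3 : IsLeakyForcingSet (HD m n) 3 (Bset m n) := Bset_leaky hm hn
  have h2 : IsLeakyForcingSet (HD m n) 2 (Bset m n) := leaky_anti (by norm_num) h3
  have hcard := ncard_Bset hm hn
  constructor
  · apply le_antisymm
    · exact Nat.sInf_le ⟨Bset m n, h2, hcard⟩
    · refine le_csInf ⟨2 * (m + n), Bset m n, h2, hcard⟩ ?_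
      rintro b ⟨B', hB', rfl⟩
      exact lower_bound hm hn B' hB'
  · apply le_antisymm
    · exact Nat.sInf_le ⟨Bset m n, h3, hcard⟩
    · refine le_csInf ⟨2 * (m + n), Bset m n, h3, hcard⟩ ?_
      rintro b ⟨B', hB', rfl⟩
      exact lower_bound hm hn B' (leaky_anti (by norm_num) hB')
end
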